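/- Let ι be a finitely generated abelian group and A a noetherian commutative ring graded by ι. Let I be a homogeneous ideal of A, let I = M₁ ∩ ⋯ ∩ M_s be a minimal G-primary decomposition, and for each l let M_l = 𝔪_{l,1} ∩ ⋯ ∩ 𝔪_{l,r_l} be a minimal primary decomposition. Then I = ⋂_{l=1}^{s} ⋂_{j=1}^{r_l} 𝔪_{l,j} is a minimal primary decomposition of I. -/

import Mathlib

/-- A homogeneous ideal `Q` of a graded ring `A` is `G`-primary if `Q ≠ A` and for all
homogeneous ideals `I`, `J` with `I·J ⊆ Q` and `J ⊄ Q`, one has `I ⊆ (√Q)*`. -/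
def Ideal.IsGPrimary {ι : Type*} [AddCommGroup ι] [DecidableEq ι] {A : Type*} [CommRing A]
    (𝒜 : ι → AddSubgroup A) [GradedRing 𝒜] (Q : Ideal A) : Prop :=
  Q ≠ ⊤ ∧ ∀ I J : Ideal A, I.IsHomogeneous 𝒜 → J.IsHomogeneous 𝒜 →
    I * J ≤ Q → ¬ J ≤ Q → I ≤ (Q.radical.homogeneousCore 𝒜).toIdeal

/-- A minimal `G`-primary decomposition of a homogeneous ideal `I`: each `Q i` is a
`G`-primary homogeneous ideal, `I = ⋂ i, Q i`, the `G`-radicals `(√(Q i))*` are pairwise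
distinct, and no component is redundant. -/
def IsMinimalGPrimaryDecomposition {ι : Type*} [AddCommGroup ι] [DecidableEq ι]
    {A : Type*} [CommRing A] (𝒜 : ι → AddSubgroup A) [GradedRing 𝒜]
    {κ : Type*} [Fintype κ] (I : Ideal A) (Q : κ → Ideal A) : Prop :=
  (∀ i, (Q i).IsHomogeneous 𝒜 ∧ (Q i).IsGPrimary 𝒜) ∧
  I = ⨅ i, Q i ∧
  (∀ i j, ((Q i).radical.homogeneousCore 𝒜).toIdeal
      = ((Q j).radical.homogeneousCore 𝒜).toIdeal → i = j) ∧
  (∀ i, ¬ (⨅ j, ⨅ (_ : j ≠ i), Q j) ≤ Q i)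

/-- A minimal primary decomposition of an ideal `I`: each `q i` is a primary ideal,
`I = ⋂ i, q i`, the radicals `√(q i)` are pairwise distinct, and no component is redundant. -/
def IsMinimalPrimaryDecomposition {A : Type*} [CommRing A]
    {κ : Type*} [Fintype κ] (I : Ideal A) (q : κ → Ideal A) : Prop :=
  (∀ i, (q i).IsPrimary) ∧
  I = ⨅ i, q i ∧
  (∀ i j, (q i).radical = (q j).radical → i = j) ∧
  (∀ i, ¬ (⨅ j, ⨅ (_ : j ≠ i), q j) ≤ q i)


namespace GPDAux
open DirectSum

section Graded
variable {ι : Type*} [AddCommGroup ι] [DecidableEq ι]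
variable {A : Type*} [CommRing A]
variable (𝒜 : ι → AddSubgroup A) [GradedRing 𝒜]

open scoped Classical in
/-- the `i`-th homogeneous component of `a` -/
noncomputable def cpt (a : A) (i : ι) : A := (DirectSum.decompose 𝒜 a i : A)

open scoped Classical in
/-- the support of `a` -/
noncomputable def supp (a : A) : Finset ι := (DirectSum.decompose 𝒜 a).support

variable {𝒜}

lemma cpt_mem (a : A) (i : ι) : cpt 𝒜 a i ∈ 𝒜 i := by
  classical exact SetLike.coe_mem _

lemma cpt_not_mem_supp {a : A} {i : ι} (h : i ∉ supp 𝒜 a) : cpt 𝒜 a i = 0 := by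
  classical
  simp only [supp, DFinsupp.notMem_support_iff] at h
  simp [cpt, h]

lemma sum_supp_cpt (a : A) : ∑ i ∈ supp 𝒜 a, cpt 𝒜 a i = a := by
  classical exact DirectSum.sum_support_decompose 𝒜 a

lemma cpt_add (a b : A) (i : ι) : cpt 𝒜 (a + b) i = cpt 𝒜 a i + cpt 𝒜 b i := by
  classical simp [cpt, DirectSum.decompose_add]

lemma cpt_sub (a b : A) (i : ι) : cpt 𝒜 (a - b) i = cpt 𝒜 a i - cpt 𝒜 b i := by
  classical simp [cpt, DirectSum.decompose_sub]

lemma cpt_zero (i : ι) : cpt 𝒜 (0 : A) i = 0 := by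
  classical simp [cpt]

lemma cpt_sum {γ : Type*} (s : Finset γ) (f : γ → A) (i : ι) :
    cpt 𝒜 (∑ x ∈ s, f x) i = ∑ x ∈ s, cpt 𝒜 (f x) i := by
  classical
  induction s using Finset.induction_on with
  | empty => simp [cpt_zero]
  | @insert a s h ih => rw [Finset.sum_insert h, Finset.sum_insert h, cpt_add, ih]

lemma cpt_of_mem_same {a : A} {i : ι} (h : a ∈ 𝒜 i) : cpt 𝒜 a i = a := by
  classical exact DirectSum.decompose_of_mem_same 𝒜 h

lemma cpt_of_mem_ne {a : A} {i j : ι} (h : a ∈ 𝒜 i) (hij : i ≠ j) : cpt 𝒜 a j = 0 := by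
  classical exact DirectSum.decompose_of_mem_ne 𝒜 h hij

/-- membership of all components for homogeneous ideals -/
lemma homog_cpt_mem {I : Ideal A} (hI : I.IsHomogeneous 𝒜) {a : A}
    (ha : a ∈ I) (i : ι) : cpt 𝒜 a i ∈ I := by
  classical exact hI i ha

lemma mem_of_cpt_mem {I : Ideal A} {a : A} (h : ∀ i ∈ supp 𝒜 a, cpt 𝒜 a i ∈ I) : a ∈ I := by
  rw [← sum_supp_cpt (𝒜 := 𝒜) a]
  exact Ideal.sum_mem _ h

lemma mul_mem_graded' {a z : A} {k d : ι} (ha : a ∈ 𝒜 k) (hz : z ∈ 𝒜 d) : a * z ∈ 𝒜 (k + d) :=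
  SetLike.mul_mem_graded ha hz

lemma cpt_mul_homog_right {a z : A} {d : ι} (hz : z ∈ 𝒜 d) (i : ι) :
    cpt 𝒜 (a * z) (i + d) = cpt 𝒜 a i * z := by
  classical exact DirectSum.coe_decompose_mul_add_of_right_mem 𝒜 hz

lemma supp_mul_homog_right {a z : A} {d : ι} (hz : z ∈ 𝒜 d) {i : ι}
    (hi : i ∈ supp 𝒜 (a * z)) : ∃ k ∈ supp 𝒜 a, i = k + d := by
  by_contra hcon
  push_neg at hcon
  have h0 : cpt 𝒜 (a * z) i = 0 := by
    conv_lhs => rw [← sum_supp_cpt (𝒜 := 𝒜) a, Finset.sum_mul, cpt_sum]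
    refine Finset.sum_eq_zero fun k hk => ?_
    exact cpt_of_mem_ne (mul_mem_graded' (cpt_mem a k) hz) fun h => hcon k hk h.symm
  exact absurd h0 (by simpa [supp, cpt, DFinsupp.mem_support_iff, ← ZeroMemClass.coe_eq_zero]
    using hi)

lemma supp_mul_subset {a b : A} {i : ι} (hi : i ∈ supp 𝒜 (a * b)) :
    ∃ k ∈ supp 𝒜 a, ∃ d ∈ supp 𝒜 b, i = k + d := by
  by_contra hcon
  push_neg at hcon
  have h0 : cpt 𝒜 (a * b) i = 0 := by
    conv_lhs => rw [← sum_supp_cpt (𝒜 := 𝒜) a, ← sum_supp_cpt (𝒜 := 𝒜) b,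
      Finset.sum_mul_sum, cpt_sum]
    refine Finset.sum_eq_zero fun k hk => ?_
    rw [cpt_sum]
    refine Finset.sum_eq_zero fun d hd => ?_
    exact cpt_of_mem_ne (mul_mem_graded' (cpt_mem a k) (cpt_mem b d))
      fun h => hcon k hk d hd h.symm
  exact absurd h0 (by simpa [supp, cpt, DFinsupp.mem_support_iff, ← ZeroMemClass.coe_eq_zero]
    using hi)

lemma supp_add_subset {a b : A} {i : ι} (hi : i ∈ supp 𝒜 (a + b)) :
    i ∈ supp 𝒜 a ∪ supp 𝒜 b := by
  by_contra hcon
  simp only [Finset.mem_union] at hcon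
  push_neg at hcon
  have h0 : cpt 𝒜 (a + b) i = 0 := by
    rw [cpt_add, cpt_not_mem_supp hcon.1, cpt_not_mem_supp hcon.2, add_zero]
  exact absurd h0 (by simpa [supp, cpt, DFinsupp.mem_support_iff, ← ZeroMemClass.coe_eq_zero]
    using hi)

lemma supp_neg_subset {a : A} {i : ι} (hi : i ∈ supp 𝒜 (-a)) : i ∈ supp 𝒜 a := by
  by_contra hcon
  have h0 : cpt 𝒜 (-a) i = 0 := by
    have := cpt_not_mem_supp (𝒜 := 𝒜) hcon
    have h2 : cpt 𝒜 (-a) i = - cpt 𝒜 a i := by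
      classical
      simp only [cpt, DirectSum.decompose_neg]
      rfl
    rw [h2, this, neg_zero]
  exact absurd h0 (by simpa [supp, cpt, DFinsupp.mem_support_iff, ← ZeroMemClass.coe_eq_zero]
    using hi)

lemma supp_homog_subset {a : A} {k : ι} (ha : a ∈ 𝒜 k) {i : ι} (hi : i ∈ supp 𝒜 a) :
    i = k := by
  by_contra hcon
  have h0 : cpt 𝒜 a i = 0 := cpt_of_mem_ne ha (fun h => hcon h.symm)
  exact absurd h0 (by simpa [supp, cpt, DFinsupp.mem_support_iff, ← ZeroMemClass.coe_eq_zero]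
    using hi)

lemma supp_zero : supp 𝒜 (0 : A) = ∅ := by
  classical simp [supp]

lemma eq_zero_of_supp_empty {a : A} (h : supp 𝒜 a = ∅) : a = 0 := by
  rw [← sum_supp_cpt (𝒜 := 𝒜) a, h, Finset.sum_empty]

end Graded

end GPDAux



namespace GPDAux
open DirectSum

section Homog
variable {ι : Type*} [AddCommGroup ι] [DecidableEq ι]
variable {A : Type*} [CommRing A]
variable {𝒜 : ι → AddSubgroup A} [GradedRing 𝒜]

lemma le_core_of_le {I J : Ideal A} (hJ : J.IsHomogeneous 𝒜) (h : J ≤ I) :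
    J ≤ (I.homogeneousCore 𝒜).toIdeal := by
  intro x hx
  have : ∀ i ∈ supp 𝒜 x, cpt 𝒜 x i ∈ (I.homogeneousCore 𝒜).toIdeal := by
    intro i _
    exact Ideal.mem_homogeneousCore_of_homogeneous_of_mem ⟨i, cpt_mem x i⟩
      (h (homog_cpt_mem hJ hx i))
  exact mem_of_cpt_mem this

lemma core_le_self (I : Ideal A) : (I.homogeneousCore 𝒜).toIdeal ≤ I :=
  Ideal.toIdeal_homogeneousCore_le 𝒜 I

lemma core_homogeneous (I : Ideal A) : ((I.homogeneousCore 𝒜).toIdeal).IsHomogeneous 𝒜 :=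
  (I.homogeneousCore 𝒜).isHomogeneous

lemma pow_homogeneous {I : Ideal A} (hI : I.IsHomogeneous 𝒜) (n : ℕ) :
    (I ^ n).IsHomogeneous 𝒜 := by
  induction n with
  | zero => simpa [Ideal.one_eq_top] using Ideal.IsHomogeneous.top 𝒜
  | succ n ih => rw [pow_succ]; exact Ideal.IsHomogeneous.mul ih hI

lemma colon_homogeneous {I J : Ideal A} (hI : I.IsHomogeneous 𝒜) (hJ : J.IsHomogeneous 𝒜) :
    (I.colon J).IsHomogeneous 𝒜 := by
  intro i a ha
  rw [Submodule.mem_colon] at ha ⊢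
  intro z hz
  -- first restrict to homogeneous z
  have key : ∀ d : ι, ∀ w ∈ 𝒜 d, w ∈ J → cpt 𝒜 a i * w ∈ I := by
    intro d w hwd hwJ
    have haz : a * w ∈ I := by simpa [smul_eq_mul] using ha w hwJ
    have : cpt 𝒜 (a * w) (i + d) ∈ I := homog_cpt_mem hI haz (i + d)
    rwa [cpt_mul_homog_right hwd i] at this
  have hz' : ∀ d ∈ supp 𝒜 z, cpt 𝒜 a i * cpt 𝒜 z d ∈ I := fun d _ =>
    key d _ (cpt_mem z d) (homog_cpt_mem hJ hz d)
  have heq : (cpt 𝒜 a i : A) • z = ∑ d ∈ supp 𝒜 z, cpt 𝒜 a i * cpt 𝒜 z d := by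
    rw [smul_eq_mul, ← Finset.mul_sum, sum_supp_cpt]
  show cpt 𝒜 a i • z ∈ I
  rw [heq]
  exact Ideal.sum_mem _ hz'

end Homog
end GPDAux

namespace GPDAux
section LemL
variable {ι : Type*} [AddCommGroup ι] [DecidableEq ι]
variable {A : Type*} [CommRing A]
variable {𝒜 : ι → AddSubgroup A} [GradedRing 𝒜] [IsNoetherianRing A]

/-- Lemma L: the homogeneous core of the radical of any component of a (minimal) primary
decomposition of a G-primary ideal `Q` equals the G-radical of `Q`. -/
lemma radical_core_eq {Q q K : Ideal A} (hQh : Q.IsHomogeneous 𝒜) (hGP : Q.IsGPrimary 𝒜)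
    (hq : q.IsPrimary) (hdec : K ⊓ q = Q) (hK : ¬ K ≤ q) :
    (q.radical.homogeneousCore 𝒜).toIdeal = (Q.radical.homogeneousCore 𝒜).toIdeal := by
  set C := (q.radical.homogeneousCore 𝒜).toIdeal with hC
  set P := (Q.radical.homogeneousCore 𝒜).toIdeal with hP
  have hQq : Q ≤ q := hdec ▸ inf_le_right
  refine le_antisymm ?_ (le_core_of_le (core_homogeneous _)
    ((core_le_self _).trans (Ideal.radical_mono hQq)))
  -- C ≤ P
  obtain ⟨n, hn⟩ : ∃ n, C ^ n ≤ q :=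
    Ideal.exists_pow_le_of_le_radical_of_fg (core_le_self _) (IsNoetherian.noetherian _)
  set J := Q.colon (C ^ n : Ideal A) with hJ
  have hKJ : K ≤ J := by
    intro k hk
    rw [Submodule.mem_colon]
    intro p hp
    rw [smul_eq_mul]
    rw [← hdec]
    exact ⟨Ideal.mul_mem_right _ _ hk, Ideal.mul_mem_left _ _ (hn hp)⟩
  have hJQ : ¬ J ≤ Q := fun h => hK ((hKJ.trans h).trans hQq)
  have hmul : C ^ n * J ≤ Q := by
    rw [Ideal.mul_le]
    intro c hc j hj
    rw [Submodule.mem_colon] at hj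
    rw [mul_comm]
    simpa [smul_eq_mul] using hj c hc
  have hCn : C ^ n ≤ P :=
    hGP.2 (C ^ n) J (pow_homogeneous (core_homogeneous _) n)
      (colon_homogeneous hQh (pow_homogeneous (core_homogeneous _) n)) hmul hJQ
  refine le_core_of_le (core_homogeneous _) ?_
  intro x hx
  have : x ^ n ∈ Q.radical := (core_le_self _) (hCn (Ideal.pow_mem_pow hx n))
  exact Ideal.mem_radical_of_pow_mem this

end LemL
end GPDAux



namespace GPDAux

section Realize
variable {A : Type*} [CommRing A] [IsNoetherianRing A]

/-- Realization: the radical of a needed component of a primary decomposition is an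
associated prime, realized as a colon ideal. -/
lemma exists_colon_eq_radical {Q q K : Ideal A} (hq : q.IsPrimary)
    (hdec : K ⊓ q = Q) (hK : ¬ K ≤ q) :
    ∃ x : A, Q.colon (Ideal.span {x}) = q.radical := by
  set p := q.radical with hp'
  have hp : p.IsPrime := Ideal.isPrime_radical hq
  obtain ⟨x₀, hx₀K, hx₀q⟩ : ∃ x₀ ∈ K, x₀ ∉ q := SetLike.not_le_iff_exists.mp hK
  set J := Q.colon (Ideal.span {x₀}) with hJ
  have memJ : ∀ u : A, u ∈ J ↔ u * x₀ ∈ Q := fun u => Ideal.mem_colon_span_singleton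
  have hqJ : q ≤ J := by
    intro u hu
    rw [memJ, ← hdec]
    exact ⟨Ideal.mul_mem_left _ _ hx₀K, Ideal.mul_mem_right _ _ hu⟩
  have hQq : Q ≤ q := hdec ▸ inf_le_right
  have hJp : J ≤ p := by
    intro u hu
    rw [memJ] at hu
    have : x₀ * u ∈ q := by rw [mul_comm]; exact hQq hu
    rcases (Ideal.isPrimary_iff.mp hq).2 this with h | h
    · exact absurd h hx₀q
    · exact h
  have hcolon_le : ∀ v : A, v ∉ J → J.colon (Ideal.span {v}) ≤ p := by
    intro v hv u hu
    rw [Ideal.mem_colon_span_singleton] at hu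
    rw [memJ] at hu
    have h1 : (v * x₀) * u ∈ q := by
      have h0 : u * v * x₀ ∈ q := hQq hu
      have heq : (v * x₀) * u = u * v * x₀ := by ring
      rw [heq]; exact h0
    rcases (Ideal.isPrimary_iff.mp hq).2 h1 with h | h
    · exfalso
      apply hv
      rw [memJ, ← hdec]
      exact ⟨Ideal.mul_mem_left _ _ hx₀K, h⟩
    · exact h
  -- the set of colon ideals
  set S : Set (Ideal A) := {L | ∃ v, v ∉ J ∧ L = J.colon (Ideal.span {v})} with hS
  have h1J : (1 : A) ∉ J := fun h => hp.ne_top (Ideal.eq_top_of_isUnit_mem _ (hJp h) isUnit_one)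
  have hSne : S.Nonempty := ⟨J.colon (Ideal.span {(1 : A)}), 1, h1J, rfl⟩
  obtain ⟨M', hM'S, hM'max⟩ := (wellFounded_gt (α := Ideal A)).has_min S hSne
  obtain ⟨v₀, hv₀J, hM'⟩ := hM'S
  have memM' : ∀ u : A, u ∈ M' ↔ u * v₀ ∈ J := fun u => hM' ▸ Ideal.mem_colon_span_singleton
  have hM'p : M' ≤ p := hM' ▸ hcolon_le v₀ hv₀J
  have hJM' : J ≤ M' := fun u hu => (memM' u).mpr (Ideal.mul_mem_right _ _ hu)
  have hM'prime : M'.IsPrime := by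
    constructor
    · intro h
      exact hp.ne_top (top_le_iff.mp (h ▸ hM'p) ▸ rfl)
    · intro a b hab
      by_cases hb : b ∈ M'
      · exact Or.inr hb
      · left
        have hbv₀ : b * v₀ ∉ J := fun h => hb ((memM' b).mpr h)
        have hle : M' ≤ J.colon (Ideal.span {b * v₀}) := by
          intro u hu
          rw [Ideal.mem_colon_span_singleton]
          have : u * v₀ ∈ J := (memM' u).mp hu
          have heq : u * (b * v₀) = b * (u * v₀) := by ring
          rw [heq]
          exact Ideal.mul_mem_left _ _ this
        have hmem : J.colon (Ideal.span {b * v₀}) ∈ S := ⟨b * v₀, hbv₀, rfl⟩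
        have heqM : M' = J.colon (Ideal.span {b * v₀}) := by
          by_contra hne
          exact hM'max _ hmem (lt_of_le_of_ne hle hne)
        have haM : a ∈ J.colon (Ideal.span {b * v₀}) := by
          rw [Ideal.mem_colon_span_singleton]
          have h1 : (a * b) * v₀ ∈ J := (memM' _).mp hab
          have heq : a * (b * v₀) = (a * b) * v₀ := by ring
          rw [heq]; exact h1
        rw [heqM]; exact haM
  have hpM' : p ≤ M' := by
    have : J.radical ≤ M' := hM'prime.radical_le_iff.mpr hJM'
    refine le_trans ?_ this
    rw [hp']
    exact Ideal.radical_mono hqJ |>.trans (le_of_eq rfl)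
  have hM'eq : M' = p := le_antisymm hM'p hpM'
  refine ⟨x₀ * v₀, ?_⟩
  rw [← hM'eq]
  ext u
  rw [Ideal.mem_colon_span_singleton, memM', memJ]
  constructor
  · intro h; have heq : u * v₀ * x₀ = u * (x₀ * v₀) := by ring
    rw [heq]; exact h
  · intro h; have heq : u * (x₀ * v₀) = u * v₀ * x₀ := by ring
    rw [heq]; exact h

end Realize
end GPDAux



namespace GPDAux

section Ord

/-- a linear-order "free-part detector" for a f.g. abelian group -/
lemma exists_phi (ι : Type*) [AddCommGroup ι] [AddGroup.FG ι] :
    ∃ (n : ℕ) (φ : ι →+ Lex (Fin n →₀ ℤ)) (e : ℕ), 0 < e ∧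
      ∀ d : ι, φ (e • d) = 0 → e • d = 0 := by
  classical
  haveI : Module.Finite ℤ ι := Module.Finite.iff_addGroup_fg.mpr ‹_›
  haveI : IsNoetherian ℤ ι := isNoetherian_of_isNoetherianRing_of_finite ℤ ι
  set T := Submodule.torsion ℤ ι with hT
  -- the free quotient
  let F := ι ⧸ T
  haveI : Module.Free ℤ F := by infer_instance
  haveI : Module.Finite ℤ F := by infer_instance
  let κ := Module.Free.ChooseBasisIndex ℤ F
  let b : Module.Basis κ ℤ F := Module.Free.chooseBasis ℤ F
  let n := Fintype.card κ
  let eqv : κ ≃ Fin n := Fintype.equivFin κ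
  let ψ : F →ₗ[ℤ] (Fin n →₀ ℤ) :=
    (Finsupp.domLCongr eqv).toLinearMap.comp b.repr.toLinearMap
  have hψinj : Function.Injective ψ := by
    simp only [ψ, LinearMap.coe_comp, LinearEquiv.coe_toLinearMap]
    exact (Finsupp.domLCongr eqv).injective.comp b.repr.injective
  refine ⟨n, AddMonoidHom.mk' (fun i => toLex (ψ (Submodule.Quotient.mk i))) ?_, ?_⟩
  · intro a c
    simp [map_add]
  -- the torsion exponent
  obtain ⟨s, hs⟩ : ∃ s : Finset ι, Submodule.span ℤ (↑s : Set ι) = T :=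
    (IsNoetherian.noetherian T)
  have hgen : ∀ g ∈ s, ∃ N : ℕ, 0 < N ∧ N • g = 0 := by
    intro g hg
    have hgT : g ∈ T := hs ▸ Submodule.subset_span hg
    obtain ⟨a, ha⟩ := (Submodule.mem_torsion_iff g).mp hgT
    refine ⟨(a : ℤ).natAbs, ?_, ?_⟩
    · have : (a : ℤ) ≠ 0 := nonZeroDivisors.coe_ne_zero a
      omega
    · rcases Int.natAbs_eq (a : ℤ) with h | h
      · have : ((a : ℤ).natAbs : ℤ) • g = 0 := by rw [← h]; exact ha
        simpa [natCast_zsmul] using this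
      · have : -(((a : ℤ).natAbs : ℤ)) • g = 0 := by rw [← h]; exact ha
        rw [neg_smul, neg_eq_zero] at this
        simpa [natCast_zsmul] using this
  choose N hN0 hNkill using hgen
  let e : ℕ := ∏ g ∈ s.attach, N g.1 g.2
  have he0 : 0 < e := Finset.prod_pos fun g _ => hN0 g.1 g.2
  have hkill : ∀ t ∈ T, e • t = 0 := by
    intro t ht
    rw [← hs] at ht
    induction ht using Submodule.span_induction with
    | mem x hx =>
      have hdvd : N x hx ∣ e := Finset.dvd_prod_of_mem _ (s.mem_attach ⟨x, hx⟩)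
      obtain ⟨c, hc⟩ := hdvd
      rw [hc, mul_comm, mul_smul, hNkill x hx, smul_zero]
    | zero => rw [smul_zero]
    | add x y _ _ hx hy => rw [smul_add, hx, hy, add_zero]
    | smul z x _ hx => rw [smul_comm, hx, smul_zero]
  refine ⟨e, he0, ?_⟩
  intro d hd
  simp only [AddMonoidHom.mk'_apply] at hd
  have h0 : ψ (Submodule.Quotient.mk (e • d)) = 0 := by
    have : toLex (ψ (Submodule.Quotient.mk (e • d))) = toLex 0 := by simpa using hd
    exact toLex.injective this
  have hmk : (Submodule.Quotient.mk (e • d) : F) = 0 := hψinj (by simpa using h0)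
  have hmemT : e • d ∈ T := (Submodule.Quotient.mk_eq_zero T).mp hmk
  -- then d itself is torsion
  have hdT : d ∈ T := by
    obtain ⟨a, ha⟩ := (Submodule.mem_torsion_iff (e • d)).mp hmemT
    rw [Submodule.mem_torsion_iff d]
    refine ⟨⟨(a : ℤ) * (e : ℤ), ?_⟩, ?_⟩
    · refine mem_nonZeroDivisors_iff_ne_zero.mpr ?_
      have h1 : (a : ℤ) ≠ 0 := nonZeroDivisors.coe_ne_zero a
      have h2 : (e : ℤ) ≠ 0 := by exact_mod_cast he0.ne'
      exact mul_ne_zero h1 h2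
    · show ((a : ℤ) * (e : ℤ)) • d = 0
      rw [mul_smul]
      have : (e : ℤ) • d = e • d := natCast_zsmul _ _
      rw [this]
      exact ha
  exact hkill d hdT ▸ rfl

end Ord
end GPDAux



namespace GPDAux
open DirectSum

section TopComp
variable {ι : Type*} [AddCommGroup ι] [DecidableEq ι]
variable {A : Type*} [CommRing A]
variable {𝒜 : ι → AddSubgroup A} [GradedRing 𝒜]
variable {n : ℕ}

lemma top_top {a a' b b' : Lex (Fin n →₀ ℤ)} (h1 : a ≤ a') (h2 : b ≤ b')
    (h : a + b = a' + b') : a = a' ∧ b = b' := by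
  constructor
  · by_contra hne
    exact absurd h (add_lt_add_of_lt_of_le (h1.lt_of_ne hne) h2).ne
  · by_contra hne
    exact absurd h (add_lt_add_of_le_of_lt h1 (h2.lt_of_ne hne)).ne

variable (φ : ι →+ Lex (Fin n →₀ ℤ))

lemma cpt_mul_eq_filter_sum (b x : A) (d : ι) :
    cpt 𝒜 (b * x) d
      = ∑ p ∈ ((supp 𝒜 b) ×ˢ (supp 𝒜 x)).filter (fun p => p.1 + p.2 = d),
          cpt 𝒜 b p.1 * cpt 𝒜 x p.2 := by
  classical
  conv_lhs => rw [← sum_supp_cpt (𝒜 := 𝒜) b, ← sum_supp_cpt (𝒜 := 𝒜) x,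
    Finset.sum_mul_sum]
  rw [← Finset.sum_product']
  rw [cpt_sum]
  rw [Finset.sum_filter]
  refine Finset.sum_congr rfl fun p hp => ?_
  by_cases h : p.1 + p.2 = d
  · rw [if_pos h]
    exact h ▸ cpt_of_mem_same (mul_mem_graded' (cpt_mem b p.1) (cpt_mem x p.2))
  · rw [if_neg h]
    exact cpt_of_mem_ne (mul_mem_graded' (cpt_mem b p.1) (cpt_mem x p.2)) h

lemma sub_top_mul {Q : Ideal A} (hQ : Q.IsHomogeneous 𝒜)
    {b x : A} (hbx : b * x ∈ Q)
    {k₀ : ι} (hk₀ : k₀ ∈ supp 𝒜 b)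
    (htop : ∀ k ∈ supp 𝒜 b, φ k ≤ φ k₀)
    (huniq : ∀ k ∈ supp 𝒜 b, φ k = φ k₀ → k = k₀)
    {μ : Lex (Fin n →₀ ℤ)} (hμtop : ∀ i ∈ supp 𝒜 x, φ i ≤ μ) :
    cpt 𝒜 b k₀ * (∑ i ∈ (supp 𝒜 x).filter (fun i => φ i = μ), cpt 𝒜 x i) ∈ Q := by
  classical
  set t := supp 𝒜 b
  set u := supp 𝒜 x
  set S := t ×ˢ u with hS
  set f : ι × ι → A := fun p => cpt 𝒜 b p.1 * cpt 𝒜 x p.2 with hf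
  set E := S.filter (fun p => φ (p.1 + p.2) = φ k₀ + μ) with hE
  -- step 1 : the E-sum is in Q
  have step1 : ∑ p ∈ E, f p ∈ Q := by
    rw [← Finset.sum_fiberwise_of_maps_to (g := fun p : ι × ι => p.1 + p.2)
      (fun p hp => Finset.mem_image_of_mem _ hp) f]
    refine Ideal.sum_mem _ fun d hd => ?_
    obtain ⟨p₀, hp₀E, hp₀d⟩ := Finset.mem_image.mp hd
    have hφd : φ d = φ k₀ + μ := by
      rw [← hp₀d]
      exact (Finset.mem_filter.mp hp₀E).2
    have hfil : E.filter (fun p => p.1 + p.2 = d) = S.filter (fun p => p.1 + p.2 = d) := by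
      ext p
      simp only [hE, Finset.mem_filter, and_assoc]
      constructor
      · rintro ⟨h1, _, h3⟩; exact ⟨h1, h3⟩
      · rintro ⟨h1, h3⟩
        exact ⟨h1, by rw [h3, hφd], h3⟩
    rw [hfil, ← cpt_mul_eq_filter_sum]
    exact homog_cpt_mem hQ hbx d
  -- step 2 : identify E
  have step2 : E = {k₀} ×ˢ (u.filter (fun i => φ i = μ)) := by
    ext p
    simp only [hE, hS, Finset.mem_filter, Finset.mem_product, Finset.mem_singleton]
    constructor
    · rintro ⟨⟨h1, h2⟩, h3⟩
      rw [map_add] at h3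
      obtain ⟨ha, hb⟩ := top_top (htop p.1 h1) (hμtop p.2 h2) h3
      exact ⟨huniq p.1 h1 ha, h2, hb⟩
    · rintro ⟨h1, h2, h3⟩
      refine ⟨⟨h1 ▸ hk₀, h2⟩, ?_⟩
      rw [map_add, h1, h3]
  rw [step2] at step1
  rw [Finset.sum_product, Finset.sum_singleton] at step1
  simpa [hf, Finset.mul_sum] using step1

end TopComp
end GPDAux

namespace GPDAux
open DirectSum

section LemW
variable {ι : Type*} [AddCommGroup ι] [DecidableEq ι]
variable {A : Type*} [CommRing A]
variable {𝒜 : ι → AddSubgroup A} [GradedRing 𝒜]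
variable {n : ℕ} (φ : ι →+ Lex (Fin n →₀ ℤ))

lemma supp_sub_filter {x : A} {μ : Lex (Fin n →₀ ℤ)} :
    supp 𝒜 (x - ∑ i ∈ (supp 𝒜 x).filter (fun i => φ i = μ), cpt 𝒜 x i)
      ⊆ (supp 𝒜 x).filter (fun i => ¬ φ i = μ) := by
  classical
  intro i hi
  set xμ := ∑ i ∈ (supp 𝒜 x).filter (fun i => φ i = μ), cpt 𝒜 x i with hxμ
  have hcptμ : ∀ j : ι, cpt 𝒜 xμ j = if j ∈ (supp 𝒜 x).filter (fun i => φ i = μ)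
      then cpt 𝒜 x j else 0 := by
    intro j
    rw [hxμ, cpt_sum]
    by_cases hj : j ∈ (supp 𝒜 x).filter (fun i => φ i = μ)
    · rw [if_pos hj]
      rw [Finset.sum_eq_single_of_mem j hj (fun k hk hkj => cpt_of_mem_ne (cpt_mem x k) hkj)]
      exact cpt_of_mem_same (cpt_mem x j)
    · rw [if_neg hj]
      exact Finset.sum_eq_zero fun k hk => cpt_of_mem_ne (cpt_mem x k) (fun h => hj (h ▸ hk))
  by_contra hcon
  have h0 : cpt 𝒜 (x - xμ) i = 0 := by
    rw [cpt_sub, hcptμ i]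
    by_cases hi1 : i ∈ (supp 𝒜 x).filter (fun i => φ i = μ)
    · rw [if_pos hi1, sub_self]
    · rw [if_neg hi1, sub_zero]
      refine cpt_not_mem_supp fun hix => ?_
      refine hcon (Finset.mem_filter.mpr ⟨hix, fun hφ => hi1 (Finset.mem_filter.mpr ⟨hix, hφ⟩)⟩)
  refine absurd h0 ?_
  simpa [supp, cpt, DFinsupp.mem_support_iff, ← ZeroMemClass.coe_eq_zero] using hi

lemma lemW {Q : Ideal A} (hQ : Q.IsHomogeneous 𝒜)
    {b : A} {k₀ : ι} (hk₀ : k₀ ∈ supp 𝒜 b)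
    (htop : ∀ k ∈ supp 𝒜 b, φ k ≤ φ k₀)
    (huniq : ∀ k ∈ supp 𝒜 b, φ k = φ k₀ → k = k₀) :
    ∀ s : ℕ, ∀ x : A, ((supp 𝒜 x).image (fun i => φ i)).card ≤ s →
      b * x ∈ Q → (cpt 𝒜 b k₀) ^ s * x ∈ Q := by
  classical
  intro s
  induction s with
  | zero =>
    intro x hcard hbx
    have : (supp 𝒜 x).image (fun i => φ i) = ∅ := Finset.card_eq_zero.mp (le_antisymm hcard bot_le)
    have hs : supp 𝒜 x = ∅ := Finset.image_eq_empty.mp this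
    rw [eq_zero_of_supp_empty hs, mul_zero]
    exact Q.zero_mem
  | succ s ih =>
    intro x hcard hbx
    by_cases hx0 : supp 𝒜 x = ∅
    · rw [eq_zero_of_supp_empty hx0, mul_zero]; exact Q.zero_mem
    have himgne : ((supp 𝒜 x).image (fun i => φ i)).Nonempty :=
      (Finset.image_nonempty).mpr (Finset.nonempty_of_ne_empty hx0)
    set μ := ((supp 𝒜 x).image (fun i => φ i)).max' himgne with hμ
    have hμtop : ∀ i ∈ supp 𝒜 x, φ i ≤ μ := fun i hi =>
      Finset.le_max' _ _ (Finset.mem_image_of_mem _ hi)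
    set xμ := ∑ i ∈ (supp 𝒜 x).filter (fun i => φ i = μ), cpt 𝒜 x i with hxμ
    have h1 : cpt 𝒜 b k₀ * xμ ∈ Q := sub_top_mul φ hQ hbx hk₀ htop huniq hμtop
    set xlow := x - xμ with hxlow
    set y := cpt 𝒜 b k₀ * xlow with hy
    have hby : b * y ∈ Q := by
      have heq : b * y = cpt 𝒜 b k₀ * (b * x) - b * (cpt 𝒜 b k₀ * xμ) := by
        rw [hy, hxlow]; ring
      rw [heq]
      exact Ideal.sub_mem _ (Ideal.mul_mem_left _ _ hbx) (Ideal.mul_mem_left _ _ h1)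
    have hsuby : ((supp 𝒜 y).image (fun i => φ i)).card ≤ s := by
      have hsub : (supp 𝒜 y).image (fun i => φ i)
          ⊆ (((supp 𝒜 x).image (fun i => φ i)).erase μ).image (fun ν => ν + φ k₀) := by
        intro ν hν
        obtain ⟨i, hi, hiν⟩ := Finset.mem_image.mp hν
        have : y = xlow * cpt 𝒜 b k₀ := by rw [hy, mul_comm]
        rw [this] at hi
        obtain ⟨d, hd, hdi⟩ := supp_mul_homog_right (cpt_mem b k₀) hi
        have hdx := supp_sub_filter φ hd
        rw [Finset.mem_filter] at hdx
        refine Finset.mem_image.mpr ⟨φ d, ?_, ?_⟩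
        · exact Finset.mem_erase.mpr ⟨hdx.2, Finset.mem_image_of_mem _ hdx.1⟩
        · rw [← hiν, hdi, map_add]
      calc ((supp 𝒜 y).image (fun i => φ i)).card
          ≤ ((((supp 𝒜 x).image (fun i => φ i)).erase μ).image (fun ν => ν + φ k₀)).card :=
            Finset.card_le_card hsub
        _ ≤ (((supp 𝒜 x).image (fun i => φ i)).erase μ).card := Finset.card_image_le
        _ = ((supp 𝒜 x).image (fun i => φ i)).card - 1 :=
            Finset.card_erase_of_mem (Finset.max'_mem _ _)
        _ ≤ s := by omega
    have hihy : (cpt 𝒜 b k₀) ^ s * y ∈ Q := ih y hsuby hby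
    have hfin : (cpt 𝒜 b k₀) ^ (s + 1) * x
        = (cpt 𝒜 b k₀) ^ s * (cpt 𝒜 b k₀ * xμ) + (cpt 𝒜 b k₀) ^ s * y := by
      rw [hy, hxlow, pow_succ]; ring
    rw [hfin]
    exact Ideal.add_mem _ (Ideal.mul_mem_left _ _ h1) hihy

end LemW
end GPDAux

namespace GPDAux
open DirectSum

section C1
variable {ι : Type*} [AddCommGroup ι] [DecidableEq ι]
variable {A : Type*} [CommRing A]
variable {𝒜 : ι → AddSubgroup A} [GradedRing 𝒜]
variable {n : ℕ} (φ : ι →+ Lex (Fin n →₀ ℤ))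

/-- C1': the homogeneous components of an element of an associated prime of a homogeneous
ideal, all of whose degrees are `e`-divisible, lie in the prime. -/
lemma components_mem_of_colon_prime {Q : Ideal A} (hQ : Q.IsHomogeneous 𝒜)
    {x : A} {p : Ideal A} (hp : p.IsPrime) (hpx : p = Q.colon (Ideal.span {x}))
    {e : ℕ} (hker : ∀ d : ι, φ (e • d) = 0 → e • d = 0) :
    ∀ b : A, b ∈ p → (∀ k ∈ supp 𝒜 b, ∃ d : ι, k = e • d) → ∀ k, cpt 𝒜 b k ∈ p := by
  classical
  suffices H : ∀ N : ℕ, ∀ b : A, (supp 𝒜 b).card ≤ N → b ∈ p →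
      (∀ k ∈ supp 𝒜 b, ∃ d : ι, k = e • d) → ∀ k, cpt 𝒜 b k ∈ p by
    exact fun b hb hbB k => H (supp 𝒜 b).card b le_rfl hb hbB k
  intro N
  induction N with
  | zero =>
    intro b hcard _ _ k
    have hs : supp 𝒜 b = ∅ := Finset.card_eq_zero.mp (le_antisymm hcard bot_le)
    rw [cpt_not_mem_supp (hs ▸ Finset.notMem_empty k)]
    exact p.zero_mem
  | succ N ih =>
    intro b hcard hbp hbB k
    by_cases hb0 : supp 𝒜 b = ∅
    · rw [cpt_not_mem_supp (hb0 ▸ Finset.notMem_empty k)]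
      exact p.zero_mem
    have himgne : ((supp 𝒜 b).image (fun i => φ i)).Nonempty :=
      (Finset.image_nonempty).mpr (Finset.nonempty_of_ne_empty hb0)
    obtain ⟨k₀, hk₀, hk₀top⟩ := Finset.mem_image.mp
      (Finset.max'_mem _ himgne)
    have htop : ∀ k' ∈ supp 𝒜 b, φ k' ≤ φ k₀ := fun k' hk' => by
      rw [hk₀top]; exact Finset.le_max' _ _ (Finset.mem_image_of_mem _ hk')
    have huniq : ∀ k' ∈ supp 𝒜 b, φ k' = φ k₀ → k' = k₀ := by
      intro k' hk' hφ
      obtain ⟨d, hd⟩ := hbB k' hk'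
      obtain ⟨d₀, hd₀⟩ := hbB k₀ hk₀
      have hφ0 : φ (e • (d - d₀)) = 0 := by
        rw [smul_sub, map_sub, ← hd, ← hd₀, hφ, sub_self]
      have := hker _ hφ0
      rw [smul_sub, sub_eq_zero, ← hd, ← hd₀] at this
      exact this
    -- the top component is in p
    have hbx : b * x ∈ Q := by
      have := hpx ▸ hbp
      exact Ideal.mem_colon_span_singleton.mp this
    set s := ((supp 𝒜 x).image (fun i => φ i)).card with hs
    have hpow : (cpt 𝒜 b k₀) ^ s ∈ p := by
      rw [hpx]
      exact Ideal.mem_colon_span_singleton.mpr (lemW φ hQ hk₀ htop huniq s x le_rfl hbx)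
    have htopmem : cpt 𝒜 b k₀ ∈ p := by
      rcases Nat.eq_zero_or_pos s with h0 | hpos
      · exfalso
        rw [h0, pow_zero] at hpow
        exact hp.ne_top (Ideal.eq_top_of_isUnit_mem _ hpow isUnit_one)
      · exact hp.mem_of_pow_mem _ hpow
    -- subtract and induct
    set b' := b - cpt 𝒜 b k₀ with hb'
    have hsuppb' : supp 𝒜 b' ⊆ (supp 𝒜 b).erase k₀ := by
      intro i hi
      have hcpt : cpt 𝒜 b' i = if i = k₀ then 0 else cpt 𝒜 b i := by
        rw [hb', cpt_sub]
        by_cases hik : i = k₀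
        · rw [if_pos hik, hik, cpt_of_mem_same (cpt_mem b k₀), sub_self]
        · rw [if_neg hik, cpt_of_mem_ne (cpt_mem b k₀) (fun h => hik h.symm), sub_zero]
      have hne : cpt 𝒜 b' i ≠ 0 := by
        simpa [supp, cpt, DFinsupp.mem_support_iff, ← ZeroMemClass.coe_eq_zero] using hi
      rw [hcpt] at hne
      by_cases hik : i = k₀
      · rw [if_pos hik] at hne; exact absurd rfl hne
      · rw [if_neg hik] at hne
        refine Finset.mem_erase.mpr ⟨hik, ?_⟩
        by_contra hcon
        exact hne (cpt_not_mem_supp hcon)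
    have hcard' : (supp 𝒜 b').card ≤ N := by
      calc (supp 𝒜 b').card ≤ ((supp 𝒜 b).erase k₀).card := Finset.card_le_card hsuppb'
        _ = (supp 𝒜 b).card - 1 := Finset.card_erase_of_mem hk₀
        _ ≤ N := by omega
    have hb'p : b' ∈ p := Ideal.sub_mem _ hbp htopmem
    have hb'B : ∀ k' ∈ supp 𝒜 b', ∃ d : ι, k' = e • d := fun k' hk' =>
      hbB k' (Finset.mem_of_mem_erase (hsuppb' hk'))
    have hcpt' : ∀ k', cpt 𝒜 b' k' ∈ p := ih b' hcard' hb'p hb'B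
    by_cases hkk : k = k₀
    · rw [hkk]; exact htopmem
    · have : cpt 𝒜 b' k = cpt 𝒜 b k := by
        rw [hb', cpt_sub, cpt_of_mem_ne (cpt_mem b k₀) (fun h => hkk h.symm), sub_zero]
      rw [← this]
      exact hcpt' k
end C1
end GPDAux



namespace GPDAux
open DirectSum Polynomial

section Bsub
variable {ι : Type*} [AddCommGroup ι] [DecidableEq ι]
variable {A : Type*} [CommRing A]
variable (𝒜 : ι → AddSubgroup A) [GradedRing 𝒜]

/-- The subring of elements all of whose homogeneous components have `e`-divisible degree. -/
noncomputable def Bsub (e : ℕ) : Subring A where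
  carrier := {b | ∀ k ∈ supp 𝒜 b, ∃ d : ι, k = e • d}
  zero_mem' := by
    intro k hk
    rw [supp_zero] at hk
    exact absurd hk (Finset.notMem_empty k)
  one_mem' := by
    intro k hk
    exact ⟨0, by rw [supp_homog_subset (SetLike.one_mem_graded 𝒜) hk, smul_zero]⟩
  add_mem' := by
    intro a b ha hb k hk
    rcases Finset.mem_union.mp (supp_add_subset hk) with h | h
    · exact ha k h
    · exact hb k h
  neg_mem' := by
    intro a ha k hk
    exact ha k (supp_neg_subset hk)
  mul_mem' := by
    intro a b ha hb k hk
    obtain ⟨k₁, hk₁, k₂, hk₂, hsum⟩ := supp_mul_subset hk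
    obtain ⟨d₁, hd₁⟩ := ha k₁ hk₁
    obtain ⟨d₂, hd₂⟩ := hb k₂ hk₂
    exact ⟨d₁ + d₂, by rw [hsum, hd₁, hd₂, smul_add]⟩

variable {𝒜}

lemma mem_Bsub {e : ℕ} {b : A} :
    b ∈ Bsub 𝒜 e ↔ ∀ k ∈ supp 𝒜 b, ∃ d : ι, k = e • d := Iff.rfl

lemma pow_e_mem_Bsub {e : ℕ} {a : A} {k : ι} (ha : a ∈ 𝒜 k) : a ^ e ∈ Bsub 𝒜 e := by
  intro i hi
  exact ⟨k, supp_homog_subset (SetLike.pow_mem_graded e ha) hi⟩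

lemma isIntegral_Bsub {e : ℕ} (he : 0 < e) (a : A) : IsIntegral (Bsub 𝒜 e) a := by
  classical
  rw [← sum_supp_cpt (𝒜 := 𝒜) a]
  refine Finset.sum_induction _ _ (fun s t hs ht => hs.add ht) isIntegral_zero ?_
  intro k _
  set cc : Bsub 𝒜 e := ⟨(cpt 𝒜 a k) ^ e, pow_e_mem_Bsub (cpt_mem a k)⟩ with hcc
  refine ⟨X ^ e - C cc, monic_X_pow_sub_C _ he.ne', ?_⟩
  have hmap : (algebraMap (Bsub 𝒜 e) A) cc = (cpt 𝒜 a k) ^ e := rfl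
  rw [eval₂_sub, eval₂_pow, eval₂_X, eval₂_C, hmap, sub_self]

/-- The key incomparability lemma: two comparable primes, both realized as colon ideals of the
same homogeneous ideal, with the same homogeneous core, are equal. -/
lemma prime_eq_of_core_eq {n : ℕ} (φ : ι →+ Lex (Fin n →₀ ℤ)) {e : ℕ} (he : 0 < e)
    (hker : ∀ d : ι, φ (e • d) = 0 → e • d = 0)
    {Q : Ideal A} (hQ : Q.IsHomogeneous 𝒜) {p p' : Ideal A}
    (hp : p.IsPrime) (hp' : p'.IsPrime)
    (hx : ∃ x : A, p = Q.colon (Ideal.span {x})) (hx' : ∃ x' : A, p' = Q.colon (Ideal.span {x'}))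
    (hcore : (p.homogeneousCore 𝒜).toIdeal = (p'.homogeneousCore 𝒜).toIdeal)
    (hle : p' ≤ p) : p' = p := by
  classical
  by_contra hne
  obtain ⟨b, hbp, hbp'⟩ := SetLike.exists_of_lt (hle.lt_of_ne hne)
  obtain ⟨x, hxeq⟩ := hx
  obtain ⟨x', hx'eq⟩ := hx'
  -- Key1 : membership in p and p' agree on Bsub
  have key1 : ∀ c : A, c ∈ Bsub 𝒜 e → (c ∈ p ↔ c ∈ p') := by
    intro c hc
    constructor
    · intro hcp
      have hcpt := components_mem_of_colon_prime (𝒜 := 𝒜) φ hQ hp hxeq hker c hcp (mem_Bsub.mp hc)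
      refine mem_of_cpt_mem (𝒜 := 𝒜) fun i _ => ?_
      have h1 : cpt 𝒜 c i ∈ (p.homogeneousCore 𝒜).toIdeal :=
        Ideal.mem_homogeneousCore_of_homogeneous_of_mem ⟨i, cpt_mem c i⟩ (hcpt i)
      exact core_le_self p' (hcore ▸ h1)
    · intro hcp'
      have hcpt := components_mem_of_colon_prime (𝒜 := 𝒜) φ hQ hp' hx'eq hker c hcp' (mem_Bsub.mp hc)
      refine mem_of_cpt_mem (𝒜 := 𝒜) fun i _ => ?_
      have h1 : cpt 𝒜 c i ∈ (p'.homogeneousCore 𝒜).toIdeal :=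
        Ideal.mem_homogeneousCore_of_homogeneous_of_mem ⟨i, cpt_mem c i⟩ (hcpt i)
      exact core_le_self p (hcore ▸ h1)
  -- the descent claim
  have claim : ∀ m : ℕ, ∀ c : ℕ → A, (∀ i, c i ∈ Bsub 𝒜 e) →
      (b ^ m + ∑ i ∈ Finset.range m, c i * b ^ i) ∈ p' → False := by
    intro m
    induction m with
    | zero =>
      intro c _ hmem
      simp only [pow_zero, Finset.range_zero, Finset.sum_empty, add_zero] at hmem
      exact hp'.ne_top (Ideal.eq_top_of_isUnit_mem _ hmem isUnit_one)
    | succ m ih =>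
      intro c hc hmem
      set G := b ^ m + ∑ i ∈ Finset.range m, c (i + 1) * b ^ i with hG
      have hbG' : b * G = b ^ (m + 1) + ∑ i ∈ Finset.range m, c (i + 1) * b ^ (i + 1) := by
        rw [hG, mul_add, Finset.mul_sum, ← pow_succ']
        congr 1
        refine Finset.sum_congr rfl fun i _ => by ring
      have hEbG : b ^ (m + 1) + ∑ i ∈ Finset.range (m + 1), c i * b ^ i = b * G + c 0 := by
        rw [Finset.sum_range_succ', hbG', pow_zero, mul_one]
        ring
      rw [hEbG] at hmem
      have hc0p : c 0 ∈ p := by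
        have h1 : c 0 = (b * G + c 0) - b * G := by ring
        rw [h1]
        exact Ideal.sub_mem _ (hle hmem) (Ideal.mul_mem_right _ _ hbp)
      have hc0p' : c 0 ∈ p' := (key1 (c 0) (hc 0)).mp hc0p
      have hbG : b * G ∈ p' := by
        have h1 : b * G = (b * G + c 0) - c 0 := by ring
        rw [h1]
        exact Ideal.sub_mem _ hmem hc0p'
      rcases hp'.mem_or_mem hbG with h | h
      · exact hbp' h
      · exact ih (fun i => c (i + 1)) (fun i => hc (i + 1)) h
  -- integral equation for b
  obtain ⟨f, hfmonic, hfeval⟩ := isIntegral_Bsub (𝒜 := 𝒜) he b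
  refine claim f.natDegree (fun i => ((f.coeff i : ↥(Bsub 𝒜 e)) : A)) (fun i => SetLike.coe_mem _) ?_
  have hexp : (b ^ f.natDegree
      + ∑ i ∈ Finset.range f.natDegree, ((f.coeff i : ↥(Bsub 𝒜 e)) : A) * b ^ i) = 0 := by
    have h1 := congrArg (fun g => Polynomial.eval₂ (algebraMap (Bsub 𝒜 e) A) b g) hfmonic.as_sum
    rw [hfeval] at h1
    rw [eval₂_add, eval₂_pow, eval₂_X, eval₂_finset_sum] at h1
    simp only [eval₂_mul, eval₂_C, eval₂_pow, eval₂_X] at h1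
    exact h1.symm
  rw [hexp]
  exact p'.zero_mem

end Bsub
end GPDAux



namespace GPDAux

section Helpers
variable {A : Type*} [CommRing A]

lemma iInf_split_ne {κ : Type*} [Fintype κ] (f : κ → Ideal A) (j₀ : κ) :
    (⨅ j, ⨅ (_ : j ≠ j₀), f j) ⊓ f j₀ = ⨅ j, f j := by
  rw [iInf_split f (· ≠ j₀)]
  congr 1
  simp

lemma iInf_ne_eq_finsetInf {κ : Type*} [Fintype κ] [DecidableEq κ] (f : κ → Ideal A) (j₀ : κ) :
    (⨅ j, ⨅ (_ : j ≠ j₀), f j) = (Finset.univ.erase j₀).inf f := by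
  apply le_antisymm
  · refine Finset.le_inf fun j hj => ?_
    exact iInf₂_le j (Finset.mem_erase.mp hj).1
  · refine le_iInf₂ fun j hj => ?_
    exact Finset.inf_le (Finset.mem_erase.mpr ⟨hj, Finset.mem_univ j⟩)

lemma exists_le_prime_of_iInf_ne_le {κ : Type*} [Fintype κ] {f : κ → Ideal A} {j₀ : κ}
    {p : Ideal A} (hp : p.IsPrime) (h : (⨅ j, ⨅ (_ : j ≠ j₀), f j) ≤ p) :
    ∃ j, j ≠ j₀ ∧ f j ≤ p := by
  classical
  rw [iInf_ne_eq_finsetInf] at h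
  obtain ⟨j, hj, hjle⟩ := (hp.inf_le').mp h
  exact ⟨j, (Finset.mem_erase.mp hj).1, hjle⟩

end Helpers
end GPDAux

open GPDAux in
/-- Let `ι` be a finitely generated abelian group and `A` a noetherian commutative ring graded
by `ι`.  Let `I = M₁ ∩ ⋯ ∩ M_s` be a minimal `G`-primary decomposition of a homogeneous ideal
`I`, and for each `l` let `M_l = 𝔪_{l,1} ∩ ⋯ ∩ 𝔪_{l,r_l}` be a minimal primary decomposition.
Then `I = ⋂_{l,j} 𝔪_{l,j}` is a minimal primary decomposition of `I`. -/
theorem minimalGPrimaryDecomposition_refines_to_minimalPrimaryDecomposition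
    {ι : Type*} [AddCommGroup ι] [AddGroup.FG ι] [DecidableEq ι]
    {A : Type*} [CommRing A] [IsNoetherianRing A]
    (𝒜 : ι → AddSubgroup A) [GradedRing 𝒜] (I : Ideal A) (hI : I.IsHomogeneous 𝒜)
    {s : ℕ} (M : Fin s → Ideal A) (hM : IsMinimalGPrimaryDecomposition 𝒜 I M)
    {r : Fin s → ℕ} (𝔪 : ∀ l : Fin s, Fin (r l) → Ideal A)
    (h𝔪 : ∀ l, IsMinimalPrimaryDecomposition (M l) (𝔪 l)) :
    IsMinimalPrimaryDecomposition I (fun p : Σ l : Fin s, Fin (r l) => 𝔪 p.1 p.2) := by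
  classical
  obtain ⟨hMcomp, hIM, hMdist, hMirr⟩ := hM
  have hprim : ∀ l j, (𝔪 l j).IsPrimary := fun l j => (h𝔪 l).1 j
  -- decomposition data for each l
  have hdec : ∀ l (j : Fin (r l)), (⨅ j', ⨅ (_ : j' ≠ j), 𝔪 l j') ⊓ 𝔪 l j = M l := by
    intro l j
    rw [(h𝔪 l).2.1]
    exact iInf_split_ne _ j
  have hirr : ∀ l (j : Fin (r l)), ¬ (⨅ j', ⨅ (_ : j' ≠ j), 𝔪 l j') ≤ 𝔪 l j :=
    fun l j => (h𝔪 l).2.2.2 j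
  -- Lemma L for all components
  have key : ∀ l (j : Fin (r l)), ((𝔪 l j).radical.homogeneousCore 𝒜).toIdeal
      = ((M l).radical.homogeneousCore 𝒜).toIdeal := fun l j =>
    radical_core_eq (hMcomp l).1 (hMcomp l).2 (hprim l j) (hdec l j) (hirr l j)
  -- associated-prime realizations
  have hreal : ∀ l (j : Fin (r l)), ∃ x : A, (M l).colon (Ideal.span {x}) = (𝔪 l j).radical :=
    fun l j => exists_colon_eq_radical (hprim l j) (hdec l j) (hirr l j)
  refine ⟨fun p => hprim p.1 p.2, ?_, ?_, ?_⟩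
  · -- the refined decomposition
    rw [hIM, iInf_sigma]
    exact iInf_congr fun l => (h𝔪 l).2.1
  · -- distinct radicals
    rintro ⟨l, j⟩ ⟨l', j'⟩ h
    simp only at h
    have hcore : ((M l).radical.homogeneousCore 𝒜).toIdeal
        = ((M l').radical.homogeneousCore 𝒜).toIdeal := by
      rw [← key l j, ← key l' j', h]
    have hll : l = l' := hMdist l l' hcore
    subst hll
    have hjj : j = j' := (h𝔪 l).2.2.1 j j' h
    subst hjj
    rfl
  · -- irredundancy
    rintro ⟨l, j⟩ H
    simp only at H
    set Z : Ideal A := ⨅ l', ⨅ (_ : l' ≠ l), M l' with hZ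
    set Y : Ideal A := ⨅ j', ⨅ (_ : j' ≠ j), 𝔪 l j' with hY
    -- step A : Z ⊓ Y is contained in every other component, hence in 𝔪 l j
    have hZY : Z ⊓ Y ≤ 𝔪 l j := by
      refine le_trans ?_ H
      refine le_iInf fun p' => le_iInf fun hne => ?_
      obtain ⟨l'', j''⟩ := p'
      by_cases hl : l'' = l
      · subst hl
        have hj : j'' ≠ j := by
          intro hj
          exact hne (by rw [hj])
        exact inf_le_right.trans (iInf₂_le j'' hj)
      · refine inf_le_left.trans ?_
        refine le_trans (iInf₂_le l'' hl) ?_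
        rw [(h𝔪 l'').2.1]
        exact iInf_le _ j''
    have hYq : ¬ Y ≤ 𝔪 l j := hirr l j
    have hZM : ¬ Z ≤ M l := hMirr l
    have hZhomog : Z.IsHomogeneous 𝒜 :=
      Ideal.IsHomogeneous.iInf fun l' => Ideal.IsHomogeneous.iInf fun _ => (hMcomp l').1
    -- step C : Y ≤ colon (M l) Z
    have hcolZ : Y ≤ (M l).colon Z := by
      intro y hy
      rw [Submodule.mem_colon]
      intro z hz
      rw [smul_eq_mul, ← hdec l j]
      constructor
      · exact Ideal.mul_mem_right _ _ hy
      · refine hZY ⟨?_, ?_⟩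
        · exact Ideal.mul_mem_left _ _ hz
        · exact Ideal.mul_mem_right _ _ hy
    -- step D : G-primariness gives Y ≤ P l
    have hYP : Y ≤ ((M l).radical.homogeneousCore 𝒜).toIdeal := by
      refine hcolZ.trans ?_
      refine (hMcomp l).2.2 ((M l).colon Z) Z
        (colon_homogeneous (hMcomp l).1 hZhomog) hZhomog ?_ hZM
      rw [Ideal.mul_le]
      intro a ha z hz
      rw [Submodule.mem_colon] at ha
      simpa [smul_eq_mul] using ha z hz
    -- step E : Y is inside the radical of 𝔪 l j
    have hp : ((𝔪 l j).radical).IsPrime := Ideal.isPrime_radical (hprim l j)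
    have hYrad : Y ≤ (𝔪 l j).radical := by
      refine hYP.trans ?_
      refine (core_le_self _).trans (Ideal.radical_mono ?_)
      rw [(h𝔪 l).2.1]
      exact iInf_le _ j
    -- step F : some other component's radical is inside
    obtain ⟨j', hj'ne, hj'le⟩ := exists_le_prime_of_iInf_ne_le hp hYrad
    have hp' : ((𝔪 l j').radical).IsPrime := Ideal.isPrime_radical (hprim l j')
    have hle : (𝔪 l j').radical ≤ (𝔪 l j).radical := hp.radical_le_iff.mpr hj'le
    -- step G : incomparability via the structure theory
    obtain ⟨n, φ, e, he, hker⟩ := exists_phi ι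
    have heq : (𝔪 l j').radical = (𝔪 l j).radical := by
      refine prime_eq_of_core_eq φ he hker (hMcomp l).1 hp hp' ?_ ?_ ?_ hle
      · obtain ⟨x, hx⟩ := hreal l j
        exact ⟨x, hx.symm⟩
      · obtain ⟨x, hx⟩ := hreal l j'
        exact ⟨x, hx.symm⟩
      · rw [key l j, key l j']
    exact hj'ne ((h𝔪 l).2.2.1 j' j heq)
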